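/- Let (r_n)_{n ≥ 1} be a sequence of i.i.d. random variables, each uniformly distributed on the unit circle {z ∈ ℂ : |z| = 1}. Fix a real number C ≥ 1. Then there is a constant K > 0 (depending only on C) such that the probability of the event { sup_{|t| ≤ N^C} | ∑_{n ≤ N} r_n n^{it} | ≤ K · √(C · N · log N) } tends to 1 as N → ∞. -/

import Mathlib

open MeasureTheory ProbabilityTheory Filter Finset

/-- The uniform probability measure on the unit circle in `ℂ`. -/
noncomputable def uniformCircle : MeasureTheory.Measure ℂ :=
  (ENNReal.ofReal (2 * Real.pi))⁻¹ •
    (MeasureTheory.volume.restrict (Set.Ioc 0 (2 * Real.pi))).map (circleMap 0 1)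

open Real
open scoped ENNReal
set_option linter.unusedSectionVars false
set_option maxHeartbeats 1000000

section Helpers

lemma uniformCircle_ae : ∀ᵐ z ∂uniformCircle, ‖z‖ = 1 := by
  have hset : MeasurableSet {z : ℂ | ¬ ‖z‖ = 1} :=
    (continuous_norm.measurable (measurableSet_singleton 1)).compl
  rw [ae_iff]
  rw [uniformCircle]
  simp only [Measure.smul_apply, smul_eq_mul]
  rw [Measure.map_apply (continuous_circleMap 0 1).measurable hset]
  have : circleMap 0 1 ⁻¹' {z : ℂ | ¬ ‖z‖ = 1} = ∅ := by
    ext θ; simp [norm_circleMap_zero]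
  rw [this]
  simp

lemma integral_uniformCircle : ∫ z, z ∂uniformCircle = 0 := by
  rw [uniformCircle, integral_smul_measure]
  rw [integral_map (f := fun z : ℂ => z) (continuous_circleMap 0 1).measurable.aemeasurable
    aestronglyMeasurable_id]
  have h2 : (0:ℝ) ≤ 2 * Real.pi := by positivity
  have := intervalIntegral.integral_of_le (f := fun θ : ℝ => circleMap 0 1 θ)
      (μ := volume) h2
  rw [← this]
  have : ∀ θ : ℝ, circleMap 0 1 θ = Complex.exp (Complex.I * θ) := by
    intro θ; simp [circleMap, mul_comm]
  simp_rw [this]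
  rw [integral_exp_mul_complex Complex.I_ne_zero]
  simp only [Complex.ofReal_zero, mul_zero, Complex.exp_zero]
  have : Complex.I * (2 * Real.pi : ℝ) = 2 * Real.pi * Complex.I := by push_cast; ring
  rw [this, Complex.exp_two_pi_mul_I]
  simp

variable {Ω : Type*} [MeasurableSpace Ω] {μ : MeasureTheory.Measure Ω} [IsProbabilityMeasure μ]

lemma my_integrable_exp_mul {X : Ω → ℝ} (hX : Measurable X)
    (hb : ∀ᵐ ω ∂μ, |X ω| ≤ 1) {s : ℝ} (hs : |s| ≤ 1) :
    Integrable (fun ω => exp (s * X ω)) μ := by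
  refine Integrable.mono' (integrable_const (exp 1)) ((hX.const_mul s).exp).aestronglyMeasurable ?_
  filter_upwards [hb] with ω hω
  rw [Real.norm_eq_abs, abs_of_pos (exp_pos _)]
  apply exp_le_exp.2
  calc s * X ω ≤ |s * X ω| := le_abs_self _
    _ = |s| * |X ω| := abs_mul _ _
    _ ≤ 1 * 1 := mul_le_mul hs hω (abs_nonneg _) zero_le_one
    _ = 1 := mul_one 1

lemma my_mgf_le {X : Ω → ℝ} (hX : Measurable X)
    (hb : ∀ᵐ ω ∂μ, |X ω| ≤ 1) (h0 : ∫ ω, X ω ∂μ = 0) {s : ℝ} (hs : |s| ≤ 1) :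
    mgf X μ s ≤ exp (3 / 4 * s ^ 2) := by
  have hXint : Integrable X μ := by
    refine Integrable.mono' (integrable_const 1) hX.aestronglyMeasurable ?_
    filter_upwards [hb] with ω hω; rwa [Real.norm_eq_abs]
  have hint := my_integrable_exp_mul (μ := μ) hX hb hs
  have key : ∀ᵐ ω ∂μ, exp (s * X ω) ≤ 1 + s * X ω + 3 / 4 * s ^ 2 := by
    filter_upwards [hb] with ω hω
    have h1 : |s * X ω| ≤ 1 := by
      rw [abs_mul]
      calc |s| * |X ω| ≤ 1 * 1 := mul_le_mul hs hω (abs_nonneg _) zero_le_one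
        _ = 1 := mul_one 1
    have := Real.exp_bound h1 (n := 2) (by norm_num)
    have hsum : ∑ i ∈ range 2, (s * X ω) ^ i / (Nat.factorial i : ℝ)
        = 1 + s * X ω := by simp [Finset.sum_range_succ]
    rw [hsum] at this
    have h2 : exp (s * X ω) - (1 + s * X ω) ≤ |s * X ω| ^ 2 * ((2 + 1 : ℕ) / ((Nat.factorial 2 : ℝ) * 2)) :=
      le_trans (le_abs_self _) this
    have h3 : |s * X ω| ^ 2 * ((2 + 1 : ℕ) / ((Nat.factorial 2 : ℝ) * 2)) ≤ 3 / 4 * s ^ 2 := by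
      have : |s * X ω| ^ 2 = s ^ 2 * (X ω) ^ 2 := by
        rw [← abs_pow]; rw [abs_of_nonneg (by positivity)]; ring
      rw [this]
      have hx2 : (X ω) ^ 2 ≤ 1 := by
        have := sq_abs (X ω) ▸ pow_le_pow_left₀ (abs_nonneg _) hω 2
        simpa [sq_abs] using this
      have : s ^ 2 * X ω ^ 2 ≤ s ^ 2 * 1 := by
        apply mul_le_mul_of_nonneg_left hx2 (sq_nonneg s)
      calc s ^ 2 * X ω ^ 2 * ((2 + 1 : ℕ) / ((Nat.factorial 2 : ℝ) * 2))
          ≤ s ^ 2 * 1 * ((2 + 1 : ℕ) / ((Nat.factorial 2 : ℝ) * 2)) := by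
            apply mul_le_mul_of_nonneg_right this (by positivity)
        _ = 3 / 4 * s ^ 2 := by norm_num [Nat.factorial]; ring
    linarith
  have hrint : Integrable (fun ω => 1 + s * X ω + 3 / 4 * s ^ 2) μ := by
    apply Integrable.add
    · exact (integrable_const 1).add (hXint.const_mul s)
    · exact integrable_const _
  calc mgf X μ s = ∫ ω, exp (s * X ω) ∂μ := rfl
    _ ≤ ∫ ω, (1 + s * X ω + 3 / 4 * s ^ 2) ∂μ := integral_mono_ae hint hrint key
    _ = 1 + s * ∫ ω, X ω ∂μ + 3 / 4 * s ^ 2 := by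
        have i1 : Integrable (fun ω => (1 : ℝ) + s * X ω) μ :=
          (integrable_const 1).add (hXint.const_mul s)
        rw [integral_add i1 (integrable_const _),
          integral_add (integrable_const 1) (hXint.const_mul s)]
        simp [integral_const_mul]
    _ = 3 / 4 * s ^ 2 + 1 := by rw [h0]; ring
    _ ≤ exp (3 / 4 * s ^ 2) := Real.add_one_le_exp _

lemma my_tail_bound (Y : ℕ → Ω → ℝ) (hm : ∀ n, Measurable (Y n))
    (hi : iIndepFun Y μ)
    (hb : ∀ n, ∀ᵐ ω ∂μ, |Y n ω| ≤ 1) (h0 : ∀ n, ∫ ω, Y n ω ∂μ = 0)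
    {N : ℕ} (hN : 0 < N) {a : ℝ} (ha : 0 ≤ a) (ha2 : a ≤ 3 / 2 * N) :
    μ {ω | a ≤ ∑ n ∈ Finset.Icc 1 N, Y n ω} ≤ ENNReal.ofReal (exp (-(a ^ 2) / (3 * N))) := by
  set s : ℝ := 2 * a / (3 * N) with hs_def
  have hNpos : (0 : ℝ) < N := Nat.cast_pos.2 hN
  have hs0 : 0 ≤ s := by positivity
  have hs1 : s ≤ 1 := by
    rw [hs_def, div_le_one (by positivity)]
    linarith
  have hsabs : |s| ≤ 1 := by rwa [abs_of_nonneg hs0]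
  have hint : ∀ n, Integrable (fun ω => exp (s * Y n ω)) μ :=
    fun n => my_integrable_exp_mul (hm n) (hb n) hsabs
  have hintsum : Integrable (fun ω => exp (s * (∑ n ∈ Finset.Icc 1 N, Y n) ω)) μ :=
    hi.integrable_exp_mul_sum hm (fun i _ => hint i)
  have chern := measure_ge_le_exp_mul_mgf (X := ∑ n ∈ Finset.Icc 1 N, Y n) (μ := μ)
      a hs0 hintsum
  have hmgf : mgf (∑ n ∈ Finset.Icc 1 N, Y n) μ s ≤ exp (3 / 4 * s ^ 2 * N) := by
    rw [hi.mgf_sum hm]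
    calc ∏ n ∈ Finset.Icc 1 N, mgf (Y n) μ s
        ≤ ∏ n ∈ Finset.Icc 1 N, exp (3 / 4 * s ^ 2) := by
          apply Finset.prod_le_prod (fun n _ => mgf_nonneg)
            (fun n _ => my_mgf_le (hm n) (hb n) (h0 n) hsabs)
      _ = exp (3 / 4 * s ^ 2 * N) := by
          rw [Finset.prod_const, ← Real.exp_nat_mul, Nat.card_Icc]
          simp [mul_comm]
  have hbound : exp (-s * a) * mgf (∑ n ∈ Finset.Icc 1 N, Y n) μ s
      ≤ exp (-(a ^ 2) / (3 * N)) := by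
    calc exp (-s * a) * mgf (∑ n ∈ Finset.Icc 1 N, Y n) μ s
        ≤ exp (-s * a) * exp (3 / 4 * s ^ 2 * N) :=
          mul_le_mul_of_nonneg_left hmgf (exp_pos _).le
      _ = exp (-s * a + 3 / 4 * s ^ 2 * N) := (Real.exp_add _ _).symm
      _ = exp (-(a ^ 2) / (3 * N)) := by
          congr 1
          rw [hs_def]
          field_simp
          ring
  have hset : {ω | a ≤ ∑ n ∈ Finset.Icc 1 N, Y n ω}
      = {ω | a ≤ (∑ n ∈ Finset.Icc 1 N, Y n) ω} := by
    ext ω; simp [Finset.sum_apply]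
  rw [hset]
  rw [ENNReal.le_ofReal_iff_toReal_le (measure_ne_top μ _) (exp_pos _).le]
  exact le_trans chern hbound

lemma my_cpow_eq_exp {n : ℕ} (hn : 1 ≤ n) (t : ℝ) :
    (n : ℂ) ^ ((t : ℂ) * Complex.I) = Complex.exp ((t * Real.log n : ℝ) * Complex.I) := by
  have hn0 : (n : ℂ) ≠ 0 := Nat.cast_ne_zero.2 (by omega)
  rw [Complex.cpow_def_of_ne_zero hn0]
  congr 1
  rw [← Complex.ofReal_natCast, ← Complex.ofReal_log (Nat.cast_nonneg n)]
  push_cast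
  ring

lemma my_abs_cpow (n : ℕ) (t : ℝ) :
    ‖(n : ℂ) ^ ((t : ℂ) * Complex.I)‖ ≤ 1 := by
  rcases Nat.eq_zero_or_pos n with h | h
  · subst h
    rcases eq_or_ne ((t : ℂ) * Complex.I) 0 with h0 | h0
    · rw [h0]; simp
    · rw [Nat.cast_zero, Complex.zero_cpow h0]; simp
  · rw [my_cpow_eq_exp h, Complex.norm_exp_ofReal_mul_I]

lemma my_abs_cpow_eq (n : ℕ) (hn : 1 ≤ n) (t : ℝ) :
    ‖(n : ℂ) ^ ((t : ℂ) * Complex.I)‖ = 1 := by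
  rw [my_cpow_eq_exp hn, Complex.norm_exp_ofReal_mul_I]

lemma my_cpow_lip {n : ℕ} (hn : 1 ≤ n) (t u : ℝ) :
    ‖(n : ℂ) ^ ((t : ℂ) * Complex.I) - (n : ℂ) ^ ((u : ℂ) * Complex.I)‖
      ≤ |t - u| * Real.log n := by
  rw [my_cpow_eq_exp hn, my_cpow_eq_exp hn]
  have hlip := lipschitzWith_circleMap 0 1
  have := hlip.dist_le_mul (t * Real.log n) (u * Real.log n)
  simp only [circleMap, Complex.ofReal_one, one_mul, zero_add] at this
  rw [Complex.dist_eq] at this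
  calc ‖Complex.exp ((t * Real.log n : ℝ) * Complex.I)
        - Complex.exp ((u * Real.log n : ℝ) * Complex.I)‖
      ≤ (Real.nnabs 1 : ℝ) * dist (t * Real.log n) (u * Real.log n) := this
    _ ≤ |t - u| * Real.log n := by
        rw [Real.dist_eq]
        have h1 : ((Real.nnabs 1 : NNReal) : ℝ) = 1 := by simp
        rw [h1, one_mul, ← sub_mul, abs_mul, abs_of_nonneg (Real.log_natCast_nonneg n)]

variable {r : ℕ → Ω → ℂ}

lemma my_r_ae (hmeas : ∀ n, Measurable (r n)) (hlaw : ∀ n : ℕ, μ.map (r n) = uniformCircle)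
    (n : ℕ) : ∀ᵐ ω ∂μ, ‖r n ω‖ = 1 := by
  have hset : MeasurableSet {z : ℂ | ‖z‖ = 1} :=
    continuous_norm.measurable (measurableSet_singleton 1)
  have h := uniformCircle_ae
  rw [← hlaw n] at h
  exact (MeasureTheory.ae_map_iff (hmeas n).aemeasurable hset).mp h

lemma my_r_integrable (hmeas : ∀ n, Measurable (r n))
    (hlaw : ∀ n : ℕ, μ.map (r n) = uniformCircle) (n : ℕ) : Integrable (r n) μ := by
  refine Integrable.mono' (integrable_const 1) (hmeas n).aestronglyMeasurable ?_
  filter_upwards [my_r_ae hmeas hlaw n] with ω hω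
  rw [hω]

lemma my_integral_r (hmeas : ∀ n, Measurable (r n))
    (hlaw : ∀ n : ℕ, μ.map (r n) = uniformCircle) (n : ℕ) : ∫ ω, r n ω ∂μ = 0 := by
  have h := integral_map (μ := μ) (f := fun z : ℂ => z) (hmeas n).aemeasurable
    aestronglyMeasurable_id
  rw [hlaw n] at h
  rw [← h, integral_uniformCircle]

lemma my_mean_zero (hmeas : ∀ n, Measurable (r n))
    (hlaw : ∀ n : ℕ, μ.map (r n) = uniformCircle) (n : ℕ) (c : ℂ) :
    ∫ ω, (r n ω * c).re ∂μ = 0 := by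
  have hint : Integrable (fun ω => r n ω * c) μ := (my_r_integrable hmeas hlaw n).mul_const c
  have h2 := integral_re hint
  simp only [RCLike.re_to_complex] at h2
  rw [h2, integral_mul_const, my_integral_r hmeas hlaw n, zero_mul, Complex.zero_re]

lemma my_abs_tail (hmeas : ∀ n, Measurable (r n))
    (hindep : ProbabilityTheory.iIndepFun
      r μ)
    (hlaw : ∀ n : ℕ, μ.map (r n) = uniformCircle)
    {N : ℕ} (hN : 0 < N) (t : ℝ) {L : ℝ} (hL : 0 ≤ L) (hL2 : L ≤ 3 * N) :
    μ {ω | L ≤ ‖∑ n ∈ Finset.Icc 1 N, r n ω * (n : ℂ) ^ ((t : ℂ) * Complex.I)‖}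
      ≤ 4 * ENNReal.ofReal (exp (-(L ^ 2) / (12 * N))) := by
  set a : ℕ → ℂ := fun n => (n : ℂ) ^ ((t : ℂ) * Complex.I) with ha_def
  -- the generic tail for any bounded coefficients
  have tail : ∀ c : ℕ → ℂ, (∀ n, ‖c n‖ ≤ 1) →
      μ {ω | L / 2 ≤ ∑ n ∈ Finset.Icc 1 N, (r n ω * c n).re}
        ≤ ENNReal.ofReal (exp (-(L ^ 2) / (12 * N))) := by
    intro c hc
    have hm : ∀ n, Measurable (fun ω => (r n ω * c n).re) :=
      fun n => Complex.measurable_re.comp ((hmeas n).mul_const (c n))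
    have hi : iIndepFun
        (fun n ω => (r n ω * c n).re) μ := by
      have := hindep.comp (fun n (z : ℂ) => (z * c n).re)
        (fun n => Complex.measurable_re.comp (measurable_mul_const (c n)))
      exact this
    have hb : ∀ n, ∀ᵐ ω ∂μ, |(r n ω * c n).re| ≤ 1 := by
      intro n
      filter_upwards [my_r_ae hmeas hlaw n] with ω hω
      calc |(r n ω * c n).re| ≤ ‖r n ω * c n‖ := Complex.abs_re_le_norm _
        _ = ‖r n ω‖ * ‖c n‖ := norm_mul _ _
        _ ≤ 1 * 1 := by rw [hω]; exact mul_le_mul_of_nonneg_left (hc n) zero_le_one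
        _ = 1 := mul_one 1
    have h0 : ∀ n, ∫ ω, (r n ω * c n).re ∂μ = 0 := fun n => my_mean_zero hmeas hlaw n (c n)
    have := my_tail_bound (fun n ω => (r n ω * c n).re) hm hi hb h0 hN
      (a := L / 2) (by linarith) (by linarith)
    refine this.trans (le_of_eq ?_)
    congr 1
    rw [div_pow]
    ring_nf
  -- event inclusion
  have hsub : {ω | L ≤ ‖∑ n ∈ Finset.Icc 1 N, r n ω * a n‖}
      ⊆ {ω | L / 2 ≤ ∑ n ∈ Finset.Icc 1 N, (r n ω * a n).re}
        ∪ {ω | L / 2 ≤ ∑ n ∈ Finset.Icc 1 N, (r n ω * (-a n)).re}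
        ∪ {ω | L / 2 ≤ ∑ n ∈ Finset.Icc 1 N, (r n ω * (a n * (-Complex.I))).re}
        ∪ {ω | L / 2 ≤ ∑ n ∈ Finset.Icc 1 N, (r n ω * (a n * Complex.I)).re} := by
    intro ω hω
    simp only [Set.mem_setOf_eq] at hω
    set S : ℂ := ∑ n ∈ Finset.Icc 1 N, r n ω * a n with hS_def
    have habs : ‖S‖ ≤ |S.re| + |S.im| := Complex.norm_le_abs_re_add_abs_im S
    have hre : S.re = ∑ n ∈ Finset.Icc 1 N, (r n ω * a n).re := Complex.re_sum _ _
    have hnre : -S.re = ∑ n ∈ Finset.Icc 1 N, (r n ω * (-a n)).re := by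
      rw [hre, ← Finset.sum_neg_distrib]
      congr 1; ext n; rw [mul_neg, Complex.neg_re]
    have him : S.im = ∑ n ∈ Finset.Icc 1 N, (r n ω * (a n * (-Complex.I))).re := by
      have : S.im = (∑ n ∈ Finset.Icc 1 N, (r n ω * a n)).im := by rw [hS_def]
      rw [this, Complex.im_sum]
      congr 1; ext n
      rw [← mul_assoc]
      simp [Complex.mul_re, Complex.mul_im]
    have hnim : -S.im = ∑ n ∈ Finset.Icc 1 N, (r n ω * (a n * Complex.I)).re := by
      have : S.im = (∑ n ∈ Finset.Icc 1 N, (r n ω * a n)).im := by rw [hS_def]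
      rw [this, Complex.im_sum, ← Finset.sum_neg_distrib]
      congr 1; ext n
      rw [← mul_assoc]
      simp [Complex.mul_re, Complex.mul_im]
    have hcase : L / 2 ≤ |S.re| ∨ L / 2 ≤ |S.im| := by
      by_contra hcon
      push_neg at hcon
      have := hω.trans habs
      linarith [hcon.1, hcon.2]
    rcases hcase with h | h
    · rcases le_abs.mp h with h' | h'
      · left; left; left; rw [Set.mem_setOf_eq, ← hre]; exact h'
      · left; left; right; rw [Set.mem_setOf_eq, ← hnre]; linarith
    · rcases le_abs.mp h with h' | h'
      · left; right; rw [Set.mem_setOf_eq, ← him]; exact h'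
      · right; rw [Set.mem_setOf_eq, ← hnim]; linarith
  have hc1 : ∀ n, ‖a n‖ ≤ 1 := fun n => my_abs_cpow n t
  have hc2 : ∀ n, ‖-a n‖ ≤ 1 := by intro n; rw [norm_neg]; exact hc1 n
  have hc3 : ∀ n, ‖a n * (-Complex.I)‖ ≤ 1 := by
    intro n; rw [norm_mul]; simpa using hc1 n
  have hc4 : ∀ n, ‖a n * Complex.I‖ ≤ 1 := by
    intro n; rw [norm_mul]; simpa using hc1 n
  calc μ {ω | L ≤ ‖∑ n ∈ Finset.Icc 1 N, r n ω * a n‖}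
      ≤ μ ({ω | L / 2 ≤ ∑ n ∈ Finset.Icc 1 N, (r n ω * a n).re}
        ∪ {ω | L / 2 ≤ ∑ n ∈ Finset.Icc 1 N, (r n ω * (-a n)).re}
        ∪ {ω | L / 2 ≤ ∑ n ∈ Finset.Icc 1 N, (r n ω * (a n * (-Complex.I))).re}
        ∪ {ω | L / 2 ≤ ∑ n ∈ Finset.Icc 1 N, (r n ω * (a n * Complex.I)).re}) :=
        measure_mono hsub
    _ ≤ 4 * ENNReal.ofReal (exp (-(L ^ 2) / (12 * N))) := by
        refine le_trans (measure_union_le _ _) ?_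
        refine le_trans (add_le_add (le_trans (measure_union_le _ _)
          (add_le_add (le_trans (measure_union_le _ _)
            (add_le_add (tail _ hc1) (tail _ hc2))) (tail _ hc3))) (tail _ hc4))
          (le_of_eq ?_)
        ring

lemma my_S_lip {Ω : Type*} (r : ℕ → Ω → ℂ) (N : ℕ) (t u : ℝ) (ω : Ω)
    (hω : ∀ n ∈ Finset.Icc 1 N, ‖r n ω‖ = 1) :
    ‖(∑ n ∈ Finset.Icc 1 N, r n ω * (n : ℂ) ^ ((t : ℂ) * Complex.I))
      - ∑ n ∈ Finset.Icc 1 N, r n ω * (n : ℂ) ^ ((u : ℂ) * Complex.I)‖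
      ≤ |t - u| * N * Real.log N := by
  rw [← Finset.sum_sub_distrib]
  calc ‖∑ n ∈ Finset.Icc 1 N,
        (r n ω * (n : ℂ) ^ ((t : ℂ) * Complex.I) - r n ω * (n : ℂ) ^ ((u : ℂ) * Complex.I))‖
      ≤ ∑ n ∈ Finset.Icc 1 N, ‖r n ω * (n : ℂ) ^ ((t : ℂ) * Complex.I) - r n ω * (n : ℂ) ^ ((u : ℂ) * Complex.I)‖ :=
        norm_sum_le _ _
    _ ≤ ∑ n ∈ Finset.Icc 1 N, |t - u| * Real.log N := by
        apply Finset.sum_le_sum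
        intro n hn
        rw [Finset.mem_Icc] at hn
        rw [← mul_sub, norm_mul, hω n (Finset.mem_Icc.2 hn), one_mul]
        refine le_trans (my_cpow_lip hn.1 t u) ?_
        have hlog : Real.log n ≤ Real.log N := by
          apply Real.log_le_log (by exact_mod_cast hn.1)
          exact_mod_cast hn.2
        exact mul_le_mul_of_nonneg_left hlog (abs_nonneg _)
    _ = |t - u| * N * Real.log N := by
        rw [Finset.sum_const, Nat.card_Icc]
        simp [mul_comm, mul_assoc, mul_left_comm]

end Helpers

theorem sup_independent_dirichlet_poly
    {Ω : Type*} [MeasurableSpace Ω] (μ : MeasureTheory.Measure Ω) [IsProbabilityMeasure μ]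
    (r : ℕ → Ω → ℂ) (hmeas : ∀ n, Measurable (r n))
    (hindep : ProbabilityTheory.iIndepFun
      r μ)
    (hlaw : ∀ n : ℕ, μ.map (r n) = uniformCircle)
    (C : ℝ) (hC : 1 ≤ C) :
    ∃ K : ℝ, 0 < K ∧
      Tendsto
        (fun N : ℕ => μ {ω |
          (⨆ t : {t : ℝ // |t| ≤ (N : ℝ) ^ C},
              ‖∑ n ∈ Finset.Icc 1 N, r n ω * (n : ℂ) ^ ((t.1 : ℂ) * Complex.I)‖) ≤
            K * Real.sqrt (C * N * Real.log N)})
        atTop (nhds 1) := by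
  refine ⟨9, by norm_num, ?_⟩
  -- notation
  set S : ℝ → ℕ → Ω → ℂ := fun t N ω => ∑ n ∈ Finset.Icc 1 N, r n ω * (n : ℂ) ^ ((t : ℂ) * Complex.I)
    with hS_def
  set P : ℕ → Ω → Prop := fun N ω =>
    (⨆ t : {t : ℝ // |t| ≤ (N : ℝ) ^ C}, ‖S t.1 N ω‖) ≤
      9 * Real.sqrt (C * N * Real.log N) with hP_def
  -- the full-measure set where all the r n have modulus one
  set E : Set Ω := {ω | ∀ n, ‖r n ω‖ = 1} with hE_def
  have hE0 : μ Eᶜ = 0 := by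
    have hae : ∀ᵐ ω ∂μ, ∀ n, ‖r n ω‖ = 1 :=
      MeasureTheory.ae_all_iff.2 (fun n => my_r_ae hmeas hlaw n)
    rw [MeasureTheory.ae_iff] at hae
    simpa [hE_def, Set.compl_setOf] using hae
  -- the key eventual bound on the bad event
  have hupper : ∀ᶠ N in atTop, μ {ω | ¬ P N ω} ≤ ENNReal.ofReal (20 / N) := by
    rw [eventually_atTop]
    refine ⟨max 3 ⌈(18 * C) ^ 2⌉₊, fun N hN => ?_⟩
    have hN3 : 3 ≤ N := le_trans (le_max_left _ _) hN
    have hN18 : ((18 * C) ^ 2 : ℝ) ≤ N := by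
      have : ⌈(18 * C) ^ 2⌉₊ ≤ N := le_trans (le_max_right _ _) hN
      exact le_trans (Nat.le_ceil _) (by exact_mod_cast this)
    have hNpos : (0 : ℝ) < N := by positivity
    have hN1 : (1 : ℝ) ≤ N := by exact_mod_cast (by omega : 1 ≤ N)
    have hN3' : (3 : ℝ) ≤ N := by exact_mod_cast hN3
    have hNnat : 0 < N := by omega
    have hlogN : 1 ≤ Real.log N := by
      rw [Real.le_log_iff_exp_le hNpos]
      calc Real.exp 1 ≤ 2.7182818286 := Real.exp_one_lt_d9.le
        _ ≤ N := by norm_num; linarith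
    have hlogN0 : 0 ≤ Real.log N := by linarith
    set b : ℝ := Real.sqrt (C * N * Real.log N) with hb_def
    have harg1 : (1 : ℝ) ≤ C * N * Real.log N := by
      have hCN : 1 ≤ C * (N : ℝ) := by nlinarith
      nlinarith
    have hb1 : 1 ≤ b := by
      rw [hb_def, show (1:ℝ) = Real.sqrt 1 by simp]
      exact Real.sqrt_le_sqrt harg1
    set lam : ℝ := 9 * b - 1 with hlam_def
    have hlam8 : 8 * b ≤ lam := by linarith
    have hlam0 : 0 ≤ lam := by linarith
    have hsqrtN : 18 * C ≤ Real.sqrt N := by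
      rw [show (18 * C : ℝ) = Real.sqrt ((18 * C) ^ 2) from (Real.sqrt_sq (by positivity)).symm]
      exact Real.sqrt_le_sqrt hN18
    have hlogsqrt : Real.log N ≤ 2 * Real.sqrt N := by
      have h1 : Real.log (Real.sqrt N) ≤ Real.sqrt N - 1 :=
        Real.log_le_sub_one_of_pos (Real.sqrt_pos.2 hNpos)
      have h2 : Real.log (Real.sqrt N) = Real.log N / 2 := Real.log_sqrt hNpos.le
      linarith
    have h9ClogN : 9 * C * Real.log N ≤ N := by
      have h1 : 9 * C * Real.log N ≤ 9 * C * (2 * Real.sqrt N) := by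
        apply mul_le_mul_of_nonneg_left hlogsqrt (by linarith)
      have h2 : 18 * C * Real.sqrt N ≤ Real.sqrt N * Real.sqrt N :=
        mul_le_mul_of_nonneg_right hsqrtN (Real.sqrt_nonneg _)
      have h3 : Real.sqrt N * Real.sqrt N = N := Real.mul_self_sqrt hNpos.le
      nlinarith
    have hlam3N : lam ≤ 3 * N := by
      have hble : b ≤ N / 3 := by
        rw [hb_def, show (N : ℝ) / 3 = Real.sqrt ((N / 3) ^ 2) from
          (Real.sqrt_sq (by positivity)).symm]
        apply Real.sqrt_le_sqrt
        nlinarith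
      linarith
    -- grid
    set M : ℕ := ⌈(N : ℝ) ^ C⌉₊ * N ^ 2 with hM_def
    set J : Finset ℤ := Finset.Icc (-(M : ℤ)) (M : ℤ) with hJ_def
    set B : ℤ → Set Ω := fun j => {ω | lam ≤ ‖S ((j : ℝ) / (N : ℝ) ^ 2) N ω‖}
      with hB_def
    have hMN : (N : ℝ) ^ C * (N : ℝ) ^ 2 ≤ (M : ℝ) := by
      rw [hM_def]
      push_cast
      exact mul_le_mul_of_nonneg_right (Nat.le_ceil _) (by positivity)
    haveI : Nonempty {t : ℝ // |t| ≤ (N : ℝ) ^ C} :=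
      ⟨⟨0, by simpa using Real.rpow_nonneg (Nat.cast_nonneg N) C⟩⟩
    -- covering step
    have hcover : {ω | ¬ P N ω} ∩ E ⊆ ⋃ j ∈ J, B j := by
      rintro ω ⟨hω1, hωE⟩
      simp only [hP_def, Set.mem_setOf_eq] at hω1
      obtain ⟨t, ht⟩ : ∃ t : {t : ℝ // |t| ≤ (N : ℝ) ^ C},
          9 * b < ‖S t.1 N ω‖ := by
        by_contra hcon
        push_neg at hcon
        exact hω1 (ciSup_le hcon)
      set j : ℤ := ⌊t.1 * (N : ℝ) ^ 2⌋ with hj_def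
      have hj1 : (j : ℝ) ≤ t.1 * (N : ℝ) ^ 2 := Int.floor_le _
      have hj2 : t.1 * (N : ℝ) ^ 2 < (j : ℝ) + 1 := Int.lt_floor_add_one _
      have htabs : |t.1| ≤ (N : ℝ) ^ C := t.2
      have htabs1 : -((N : ℝ) ^ C) ≤ t.1 ∧ t.1 ≤ (N : ℝ) ^ C := abs_le.mp htabs
      have hN2pos : (0 : ℝ) < (N : ℝ) ^ 2 := by positivity
      have hjJ : j ∈ J := by
        rw [hJ_def, Finset.mem_Icc]
        constructor
        · have hmul : -((N : ℝ) ^ C) * (N : ℝ) ^ 2 ≤ t.1 * (N : ℝ) ^ 2 :=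
            mul_le_mul_of_nonneg_right htabs1.1 hN2pos.le
          have h1 : -((M : ℤ) : ℝ) - 1 < (j : ℝ) := by push_cast; nlinarith
          have h2 : -(M : ℤ) - 1 < j := by exact_mod_cast h1
          omega
        · have hmul : t.1 * (N : ℝ) ^ 2 ≤ (N : ℝ) ^ C * (N : ℝ) ^ 2 :=
            mul_le_mul_of_nonneg_right htabs1.2 hN2pos.le
          have h1 : (j : ℝ) ≤ ((M : ℤ) : ℝ) := by push_cast; linarith
          exact_mod_cast h1
      have hdist : |t.1 - (j : ℝ) / (N : ℝ) ^ 2| ≤ 1 / (N : ℝ) ^ 2 := by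
        rw [abs_le]
        constructor
        · have hge : (j : ℝ) / (N : ℝ) ^ 2 ≤ t.1 := by
            rw [div_le_iff₀ hN2pos]; linarith
          have h0 : (0:ℝ) < 1 / (N : ℝ) ^ 2 := by positivity
          linarith
        · have : t.1 - (j : ℝ) / (N : ℝ) ^ 2 < 1 / (N : ℝ) ^ 2 := by
            rw [sub_lt_iff_lt_add, ← add_div, lt_div_iff₀ hN2pos]
            linarith
          linarith
      have hωE' : ∀ n ∈ Finset.Icc 1 N, ‖r n ω‖ = 1 := fun n _ => hωE n
      have hlip := my_S_lip r N t.1 ((j : ℝ) / (N : ℝ) ^ 2) ω hωE'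
      have hlip2 : ‖S t.1 N ω - S ((j : ℝ) / (N : ℝ) ^ 2) N ω‖ ≤ 1 := by
        refine le_trans hlip ?_
        have h1 : |t.1 - (j : ℝ) / (N : ℝ) ^ 2| * (N:ℝ) * Real.log N
            ≤ (1 / (N : ℝ) ^ 2) * (N:ℝ) * Real.log N := by
          apply mul_le_mul_of_nonneg_right
            (mul_le_mul_of_nonneg_right hdist (Nat.cast_nonneg N)) hlogN0
        have hlogle : Real.log N ≤ N := by
          have := Real.log_le_sub_one_of_pos hNpos
          linarith
        have h2 : (1 / (N : ℝ) ^ 2) * (N:ℝ) * Real.log N = Real.log N / N := by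
          field_simp
        rw [h2] at h1
        refine le_trans h1 ?_
        rw [div_le_one hNpos]
        exact hlogle
      refine Set.mem_biUnion hjJ ?_
      rw [hB_def, Set.mem_setOf_eq]
      have hnorm := norm_sub_norm_le (S t.1 N ω) (S ((j : ℝ) / (N : ℝ) ^ 2) N ω)
      rw [hlam_def]
      linarith
    -- measure bound
    have hsplit : {ω | ¬ P N ω} ⊆ ({ω | ¬ P N ω} ∩ E) ∪ Eᶜ := by
      intro ω hω
      by_cases hE : ω ∈ E
      · exact Or.inl ⟨hω, hE⟩
      · exact Or.inr hE
    have htail : ∀ j : ℤ, μ (B j) ≤ 4 * ENNReal.ofReal (Real.exp (-(lam ^ 2) / (12 * N))) := by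
      intro j
      exact my_abs_tail hmeas hindep hlaw hNnat ((j : ℝ) / (N : ℝ) ^ 2) hlam0 hlam3N
    have hcard : (J.card : ℝ) = 2 * M + 1 := by
      rw [hJ_def, Int.card_Icc]
      have h : ((M : ℤ) + 1 - -(M : ℤ)).toNat = 2 * M + 1 := by omega
      rw [h]
      push_cast
      ring
    have hmeasbound : μ {ω | ¬ P N ω} ≤
        ENNReal.ofReal ((J.card : ℝ) * (4 * Real.exp (-(lam ^ 2) / (12 * N)))) := by
      calc μ {ω | ¬ P N ω} ≤ μ (({ω | ¬ P N ω} ∩ E) ∪ Eᶜ) := measure_mono hsplit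
        _ ≤ μ ({ω | ¬ P N ω} ∩ E) + μ Eᶜ := measure_union_le _ _
        _ = μ ({ω | ¬ P N ω} ∩ E) := by rw [hE0, add_zero]
        _ ≤ μ (⋃ j ∈ J, B j) := measure_mono hcover
        _ ≤ ∑ j ∈ J, μ (B j) := measure_biUnion_finset_le _ _
        _ ≤ ∑ _j ∈ J, 4 * ENNReal.ofReal (Real.exp (-(lam ^ 2) / (12 * N))) :=
            Finset.sum_le_sum (fun j _ => htail j)
        _ = (J.card : ℝ≥0∞) * (4 * ENNReal.ofReal (Real.exp (-(lam ^ 2) / (12 * N)))) := by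
            rw [Finset.sum_const, nsmul_eq_mul]
        _ = ENNReal.ofReal ((J.card : ℝ) * (4 * Real.exp (-(lam ^ 2) / (12 * N)))) := by
            rw [ENNReal.ofReal_mul (by positivity), ENNReal.ofReal_mul (by norm_num)]
            congr 1
            · rw [ENNReal.ofReal_natCast]
            · congr 1
              norm_num
    refine le_trans hmeasbound (ENNReal.ofReal_le_ofReal ?_)
    -- the real-number computation
    have hexp : Real.exp (-(lam ^ 2) / (12 * N)) ≤ (N : ℝ) ^ (-(C + 4)) := by
      have hlamsq : 64 * (C * N * Real.log N) ≤ lam ^ 2 := by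
        have h1 : (8 * b) ^ 2 ≤ lam ^ 2 := by
          apply pow_le_pow_left₀ (by positivity) hlam8
        have h2 : b ^ 2 = C * N * Real.log N := Real.sq_sqrt (by positivity)
        nlinarith
      have h3 : (C + 4) * Real.log N ≤ lam ^ 2 / (12 * N) := by
        rw [le_div_iff₀ (by positivity)]
        nlinarith
      calc Real.exp (-(lam ^ 2) / (12 * N)) ≤ Real.exp (-((C + 4) * Real.log N)) := by
            apply Real.exp_le_exp.2
            rw [neg_div]
            linarith
        _ = (N : ℝ) ^ (-(C + 4)) := by
            rw [Real.rpow_def_of_pos hNpos]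
            congr 1
            ring
    have hcount : (J.card : ℝ) ≤ 5 * (N : ℝ) ^ (C + 2) := by
      rw [hcard]
      have hceil : (⌈(N : ℝ) ^ C⌉₊ : ℝ) < (N : ℝ) ^ C + 1 :=
        Nat.ceil_lt_add_one (by positivity)
      have hM : (M : ℝ) ≤ ((N : ℝ) ^ C + 1) * (N : ℝ) ^ 2 := by
        rw [hM_def]
        push_cast
        exact mul_le_mul_of_nonneg_right hceil.le (by positivity)
      have hrpow1 : (1 : ℝ) ≤ (N : ℝ) ^ C := Real.one_le_rpow hN1 (by linarith)
      have hsplitpow : (N : ℝ) ^ (C + 2) = (N : ℝ) ^ C * (N : ℝ) ^ 2 := by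
        rw [Real.rpow_add hNpos, Real.rpow_two]
      rw [hsplitpow]
      have hN2one : (1 : ℝ) ≤ (N : ℝ) ^ 2 := by nlinarith
      nlinarith
    have hfinal : (J.card : ℝ) * (4 * Real.exp (-(lam ^ 2) / (12 * N))) ≤ 20 / N := by
      have hcardpos : (0 : ℝ) ≤ (J.card : ℝ) := Nat.cast_nonneg _
      have h1 : (J.card : ℝ) * (4 * Real.exp (-(lam ^ 2) / (12 * N)))
          ≤ (5 * (N : ℝ) ^ (C + 2)) * (4 * (N : ℝ) ^ (-(C + 4))) := by
        apply mul_le_mul hcount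
        · exact mul_le_mul_of_nonneg_left hexp (by norm_num)
        · positivity
        · positivity
      have h2 : (5 * (N : ℝ) ^ (C + 2)) * (4 * (N : ℝ) ^ (-(C + 4)))
          = 20 * (N : ℝ) ^ (-(2:ℝ)) := by
        rw [mul_mul_mul_comm, ← Real.rpow_add hNpos]
        rw [show C + 2 + -(C + 4) = -(2:ℝ) by ring]
        norm_num
      have h3 : (N : ℝ) ^ (-(2:ℝ)) ≤ (N : ℝ) ^ (-(1:ℝ)) :=
        Real.rpow_le_rpow_of_exponent_le hN1 (by norm_num)
      have h4 : (N : ℝ) ^ (-(1:ℝ)) = 1 / N := by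
        rw [Real.rpow_neg_one]
        ring
      calc (J.card : ℝ) * (4 * Real.exp (-(lam ^ 2) / (12 * N)))
          ≤ 20 * (N : ℝ) ^ (-(2:ℝ)) := by rw [← h2]; exact h1
        _ ≤ 20 * (1 / N) := by rw [← h4]; exact mul_le_mul_of_nonneg_left h3 (by norm_num)
        _ = 20 / N := by ring
    exact hfinal
  -- conclude by squeezing
  have hbadto0 : Tendsto (fun N : ℕ => μ {ω | ¬ P N ω}) atTop (nhds 0) := by
    have hub : Tendsto (fun N : ℕ => ENNReal.ofReal (20 / N)) atTop (nhds 0) := by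
      have := ENNReal.tendsto_ofReal (tendsto_const_div_atTop_nhds_zero_nat 20)
      simpa using this
    exact tendsto_of_tendsto_of_tendsto_of_le_of_le' tendsto_const_nhds hub
      (Eventually.of_forall (fun N => by simp)) hupper
  have hlow : Tendsto (fun N : ℕ => 1 - μ {ω | ¬ P N ω}) atTop (nhds 1) := by
    have hcont : Continuous (fun x : ℝ≥0∞ => 1 - x) := ENNReal.continuous_sub_left ENNReal.one_ne_top
    have := (hcont.continuousAt (x := (0:ℝ≥0∞))).tendsto.comp hbadto0
    simpa [Function.comp_def] using this
  have hle1 : ∀ N : ℕ, 1 - μ {ω | ¬ P N ω} ≤ μ {ω | P N ω} := by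
    intro N
    rw [tsub_le_iff_right]
    have huniv : {ω : Ω | P N ω} ∪ {ω : Ω | ¬ P N ω} = Set.univ := by
      ext ω; simp [em]
    calc (1 : ℝ≥0∞) = μ Set.univ := (measure_univ).symm
      _ = μ ({ω | P N ω} ∪ {ω | ¬ P N ω}) := by rw [huniv]
      _ ≤ μ {ω | P N ω} + μ {ω | ¬ P N ω} := measure_union_le _ _
  have hle2 : ∀ N : ℕ, μ {ω | P N ω} ≤ 1 := fun N => prob_le_one
  exact tendsto_of_tendsto_of_tendsto_of_le_of_le hlow tendsto_const_nhds hle1 hle2
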